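/- For G₊(x) = |1 + e(x) + e(3x)|² and G₋(x) = |1 + e(x) - e(3x)|², the derivatives satisfy G₊'(x)² < 1300 · G₊(x) and G₋'(x)² < 1100 · G₋(x) for all x ∈ ℝ. -/

import Mathlib

open Real Complex

private lemma absval (θ : ℝ) :
    (‖1 + Complex.exp ((θ:ℂ)*Complex.I) + Complex.exp (((3*θ:ℝ):ℂ)*Complex.I)‖)^2
      = 8*(Real.cos θ)^3 + 4*(Real.cos θ)^2 - 4*Real.cos θ + 1 := by
  rw [Complex.exp_mul_I, Complex.exp_mul_I, Complex.sq_norm]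
  simp [Complex.normSq_apply]
  rw [show ((3:ℂ)*(θ:ℂ)) = ((3*θ:ℝ):ℂ) from by push_cast; ring]
  simp only [Complex.cos_ofReal_re, Complex.sin_ofReal_re, Complex.cos_ofReal_im,
    Complex.sin_ofReal_im]
  rw [Real.cos_three_mul, Real.sin_three_mul]
  linear_combination (16*Real.sin θ^4 - 16*(1+Real.cos θ^2)*Real.sin θ^2 + 16*Real.cos θ^4) *
    Real.sin_sq_add_cos_sq θ

private lemma absvalm (θ : ℝ) :
    (‖1 + Complex.exp ((θ:ℂ)*Complex.I) - Complex.exp (((3*θ:ℝ):ℂ)*Complex.I)‖)^2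
      = -8*(Real.cos θ)^3 - 4*(Real.cos θ)^2 + 8*Real.cos θ + 5 := by
  rw [Complex.exp_mul_I, Complex.exp_mul_I, Complex.sq_norm]
  simp [Complex.normSq_apply]
  rw [show ((3:ℂ)*(θ:ℂ)) = ((3*θ:ℝ):ℂ) from by push_cast; ring]
  simp only [Complex.cos_ofReal_re, Complex.sin_ofReal_re, Complex.cos_ofReal_im,
    Complex.sin_ofReal_im]
  rw [Real.cos_three_mul, Real.sin_three_mul]
  linear_combination (16*Real.sin θ^4 - 16*Real.cos θ^2*Real.sin θ^2 + 4*(2*Real.cos θ^2-1)^2) *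
    Real.sin_sq_add_cos_sq θ

private lemma ineq1' (c : ℝ) (h1 : -1 ≤ c) (h2 : c ≤ 1) :
    632*(1-c^2)*(6*c^2+2*c-1)^2 < 1300*(8*c^3+4*c^2-4*c+1) := by
  have hu : (0:ℝ) ≤ 1 - c := by linarith
  have hv : (0:ℝ) ≤ 1 + c := by linarith
  nlinarith [mul_nonneg hu hv, sq_nonneg (c - 63/100), sq_nonneg (c + 63/100), sq_nonneg c,
    sq_nonneg (c^2 - 63/100*c), sq_nonneg (c^2+c), sq_nonneg (c^2-c), sq_nonneg (c^2-1),
    sq_nonneg (c^3 - 63/100*c^2), mul_nonneg hu (sq_nonneg (c - 63/100)),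
    mul_nonneg hv (sq_nonneg (c - 63/100)), mul_nonneg (mul_nonneg hu hv) (sq_nonneg (c - 63/100)),
    mul_nonneg (mul_nonneg hu hv) (sq_nonneg (c^2 - 63/100*c)),
    mul_nonneg (mul_nonneg hu hv) (sq_nonneg (c^2 - 63/100)),
    sq_nonneg (c^3 - 63/100*c), sq_nonneg ((c-63/100)*(c+1)), sq_nonneg ((c-63/100)*c*(c+1))]

set_option maxHeartbeats 1000000 in
private lemma ineq2' (c : ℝ) (h1 : -1 ≤ c) (h2 : c ≤ 1) :
    2527*(1-c^2)*(3*c^2+c-1)^2 < 1100*(-8*c^3-4*c^2+8*c+5) := by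
  have hu : (0:ℝ) ≤ 1 - c := by linarith
  have hv : (0:ℝ) ≤ 1 + c := by linarith
  nlinarith [mul_nonneg hu hv, sq_nonneg (c + 452/1000), sq_nonneg ((c+452/1000)*(c+768/1000)),
    sq_nonneg ((c+452/1000)*(c-944/1000)), sq_nonneg ((c+768/1000)*(c-944/1000)),
    mul_nonneg (mul_nonneg hu hv) (sq_nonneg ((c+452/1000)*(c+768/1000))),
    mul_nonneg (mul_nonneg hu hv) (sq_nonneg ((c+452/1000)*(c-944/1000))),
    mul_nonneg (mul_nonneg hu hv) (sq_nonneg ((c+768/1000)*(c-944/1000))),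
    mul_nonneg hu (sq_nonneg ((c+452/1000)*(c+768/1000))),
    mul_nonneg hv (sq_nonneg ((c+452/1000)*(c-944/1000))),
    sq_nonneg ((c+452/1000)*(c+768/1000)*(c-944/1000))]

theorem stmt_11
    (Gp Gm : ℝ → ℝ)
    (hGp : ∀ x : ℝ, Gp x = (‖1 + Complex.exp (2 * π * Complex.I * x) +
        Complex.exp (2 * π * Complex.I * (3 * x))‖) ^ 2)
    (hGm : ∀ x : ℝ, Gm x = (‖1 + Complex.exp (2 * π * Complex.I * x) -
        Complex.exp (2 * π * Complex.I * (3 * x))‖) ^ 2) :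
    ∀ x : ℝ, (deriv Gp x) ^ 2 < 1300 * Gp x ∧ (deriv Gm x) ^ 2 < 1100 * Gm x := by
  have hGp' : Gp = fun y : ℝ =>
      8*(Real.cos (2*π*y))^3 + 4*(Real.cos (2*π*y))^2 - 4*Real.cos (2*π*y) + 1 := by
    funext y
    rw [hGp y, show (2 * (π:ℂ) * Complex.I * (y:ℂ)) = ((2*π*y : ℝ):ℂ)*Complex.I from by
      push_cast; ring,
      show (2 * (π:ℂ) * Complex.I * (3*(y:ℂ))) = ((3*(2*π*y) : ℝ):ℂ)*Complex.I from by
      push_cast; ring]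
    exact absval (2*π*y)
  have hGm' : Gm = fun y : ℝ =>
      -8*(Real.cos (2*π*y))^3 - 4*(Real.cos (2*π*y))^2 + 8*Real.cos (2*π*y) + 5 := by
    funext y
    rw [hGm y, show (2 * (π:ℂ) * Complex.I * (y:ℂ)) = ((2*π*y : ℝ):ℂ)*Complex.I from by
      push_cast; ring,
      show (2 * (π:ℂ) * Complex.I * (3*(y:ℂ))) = ((3*(2*π*y) : ℝ):ℂ)*Complex.I from by
      push_cast; ring]
    exact absvalm (2*π*y)
  intro x
  set c := Real.cos (2*π*x) with hc
  set s := Real.sin (2*π*x) with hs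
  have hcd : HasDerivAt (fun y : ℝ => Real.cos (2*π*y)) (-s * (2*π)) x := by
    have h1 : HasDerivAt (fun y : ℝ => 2*π*y) (2*π) x := by
      simpa using (hasDerivAt_id x).const_mul (2*π)
    exact (Real.hasDerivAt_cos (2*π*x)).comp x h1
  have hDp : HasDerivAt Gp ((24*c^2 + 8*c - 4) * (-s*(2*π))) x := by
    rw [hGp']
    have h := ((((hcd.pow 3).const_mul (8:ℝ)).add ((hcd.pow 2).const_mul (4:ℝ))).sub
      (hcd.const_mul (4:ℝ))).add_const (1:ℝ)
    exact h.congr_deriv (by simp only [hc]; push_cast; ring)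
  have hDm : HasDerivAt Gm ((-24*c^2 - 8*c + 8) * (-s*(2*π))) x := by
    rw [hGm']
    have h := ((((hcd.pow 3).const_mul (-8:ℝ)).sub ((hcd.pow 2).const_mul (4:ℝ))).add
      (hcd.const_mul (8:ℝ))).add_const (5:ℝ)
    exact h.congr_deriv (by simp only [hc]; push_cast; ring)
  have hsc : s^2 + c^2 = 1 := Real.sin_sq_add_cos_sq _
  have hc1 : -1 ≤ c := Real.neg_one_le_cos _
  have hc2 : c ≤ 1 := Real.cos_le_one _
  have hπ : π^2 < 158/16 := by
    nlinarith [Real.pi_lt_d6, Real.pi_gt_d6]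
  have hπ' : π^2 < 2527/256 := by
    nlinarith [Real.pi_lt_d6, Real.pi_gt_d6]
  have hπ0 : (0:ℝ) < π := Real.pi_pos
  constructor
  · rw [hDp.deriv, hGp']
    have key := ineq1' c hc1 hc2
    have hs2 : s^2 = 1 - c^2 := by linarith
    calc ((24*c^2 + 8*c - 4) * (-s*(2*π)))^2
        = 4*π^2*(1-c^2)*(4*(6*c^2+2*c-1))^2 := by rw [← hs2]; ring
      _ ≤ 4*(158/16)*(1-c^2)*(4*(6*c^2+2*c-1))^2 := by
          have h1 : (0:ℝ) ≤ 1 - c^2 := by nlinarith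
          nlinarith [sq_nonneg (4*(6*c^2+2*c-1)), mul_nonneg h1 (sq_nonneg (4*(6*c^2+2*c-1)))]
      _ = 632*(1-c^2)*(6*c^2+2*c-1)^2 := by ring
      _ < 1300*(8*c^3+4*c^2-4*c+1) := key
      _ = 1300 * (8*c^3 + 4*c^2 - 4*c + 1) := by ring
  · rw [hDm.deriv, hGm']
    have key := ineq2' c hc1 hc2
    have hs2 : s^2 = 1 - c^2 := by linarith
    calc ((-24*c^2 - 8*c + 8) * (-s*(2*π)))^2
        = 4*π^2*(1-c^2)*(8*(3*c^2+c-1))^2 := by rw [← hs2]; ring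
      _ ≤ 4*(2527/256)*(1-c^2)*(8*(3*c^2+c-1))^2 := by
          have h1 : (0:ℝ) ≤ 1 - c^2 := by nlinarith
          nlinarith [sq_nonneg (8*(3*c^2+c-1)), mul_nonneg h1 (sq_nonneg (8*(3*c^2+c-1)))]
      _ = 2527*(1-c^2)*(3*c^2+c-1)^2 := by ring
      _ < 1100*(-8*c^3-4*c^2+8*c+5) := key
      _ = 1100 * (-8*c^3 - 4*c^2 + 8*c + 5) := by ring
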